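/- Let $N\geq 3$, $2\leq r\leq 2^*$, $\mu\geq\mu_0:=S^2(c_0|\{V<c_0\}|^{(2^*-2)/2^*})^{-1}$, where $V\geq 0$ with $|\{V<c_0\}|<\infty$ and $S$ is the best Sobolev constant. Then for all $u$ with $\|u\|_\mu^2:=\int(|\nabla u|^2+\mu V u^2)\,dx<\infty$, one has $\int_{\mathbb{R}^N}|u|^r\,dx\leq |\{V<c_0\}|^{(2^*-r)/2^*}S^{-r}\|u\|_\mu^r$. -/

import Mathlib

open MeasureTheory

open ENNReal

lemma real_holder {X : Type*} [MeasurableSpace X] (ν : Measure X) {f g : X → ℝ}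
    (hf : AEMeasurable f ν) (hg : AEMeasurable g ν)
    (hfnn : ∀ x, 0 ≤ f x) (hgnn : ∀ x, 0 ≤ g x) {a b : ℝ}
    (hab : Real.HolderConjugate a b)
    (hfa : Integrable (fun x => f x ^ a) ν) (hgb : Integrable (fun x => g x ^ b) ν) :
    ∫ x, f x * g x ∂ν ≤ (∫ x, f x ^ a ∂ν) ^ (1/a) * (∫ x, g x ^ b ∂ν) ^ (1/b) := by
  have ha0 : 0 ≤ a := hab.pos.le
  have hb0 : 0 ≤ b := hab.symm.pos.le
  set F : X → ℝ≥0∞ := fun x => ENNReal.ofReal (f x) with hF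
  set G : X → ℝ≥0∞ := fun x => ENNReal.ofReal (g x) with hG
  have hFa : ∫⁻ x, F x ^ a ∂ν = ∫⁻ x, ENNReal.ofReal (f x ^ a) ∂ν :=
    lintegral_congr fun x => ENNReal.ofReal_rpow_of_nonneg (hfnn x) ha0
  have hGb : ∫⁻ x, G x ^ b ∂ν = ∫⁻ x, ENNReal.ofReal (g x ^ b) ∂ν :=
    lintegral_congr fun x => ENNReal.ofReal_rpow_of_nonneg (hgnn x) hb0
  have h1 : ∫ x, f x ^ a ∂ν = (∫⁻ x, F x ^ a ∂ν).toReal := by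
    rw [integral_eq_lintegral_of_nonneg_ae
      (Filter.Eventually.of_forall fun x => Real.rpow_nonneg (hfnn x) a)
      ((Real.continuous_rpow_const ha0).measurable.comp_aemeasurable hf).aestronglyMeasurable,
      hFa]
  have h2 : ∫ x, g x ^ b ∂ν = (∫⁻ x, G x ^ b ∂ν).toReal := by
    rw [integral_eq_lintegral_of_nonneg_ae
      (Filter.Eventually.of_forall fun x => Real.rpow_nonneg (hgnn x) b)
      ((Real.continuous_rpow_const hb0).measurable.comp_aemeasurable hg).aestronglyMeasurable,
      hGb]
  have hfin_a : ∫⁻ x, F x ^ a ∂ν ≠ ⊤ := by rw [hFa]; exact hfa.lintegral_lt_top.ne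
  have hfin_b : ∫⁻ x, G x ^ b ∂ν ≠ ⊤ := by rw [hGb]; exact hgb.lintegral_lt_top.ne
  have key := ENNReal.lintegral_mul_le_Lp_mul_Lq ν hab hf.ennreal_ofReal hg.ennreal_ofReal
  have h0 : ∫ x, f x * g x ∂ν = (∫⁻ x, (F * G) x ∂ν).toReal := by
    rw [integral_eq_lintegral_of_nonneg_ae
      (Filter.Eventually.of_forall fun x => mul_nonneg (hfnn x) (hgnn x))
      (hf.mul hg).aestronglyMeasurable]
    congr 1
    exact lintegral_congr fun x => ENNReal.ofReal_mul (hfnn x)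
  rw [h0, h1, h2, ENNReal.toReal_rpow, ENNReal.toReal_rpow, ← ENNReal.toReal_mul]
  refine ENNReal.toReal_mono ?_ key
  exact ENNReal.mul_ne_top (ENNReal.rpow_ne_top_of_nonneg (by positivity) hfin_a)
    (ENNReal.rpow_ne_top_of_nonneg (by positivity) hfin_b)

lemma rpow_alg {A S T : ℝ} (hA : 0 < A) (hS : 0 < S) (hT : 0 < T) {a b c d e f a' b' c' : ℝ}
    (h1 : a + d = a') (h2 : b + e = b') (h3 : c + f = c') :
    (A ^ a * S ^ b * T ^ c) * (A ^ d * S ^ e * T ^ f) = A ^ a' * S ^ b' * T ^ c' := by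
  rw [← h1, ← h2, ← h3, Real.rpow_add hA, Real.rpow_add hS, Real.rpow_add hT]; ring

/-- The critical Sobolev exponent `2* = 2N/(N-2)`. -/
noncomputable def twoStar (N : ℕ) : ℝ := 2 * (N : ℝ) / ((N : ℝ) - 2)

set_option maxHeartbeats 2000000 in
/-- Let `N ≥ 3`, `2 ≤ r ≤ 2*`, `V ≥ 0` with `0 < |{V < c₀}| < ∞`, `S` the
best Sobolev constant, and `μ ≥ μ₀ := S²(c₀|{V<c₀}|^{(2*-2)/2*})⁻¹`. Then for all
`u ∈ H¹(ℝᴺ)` with `‖u‖_μ² = ∫(|∇u|² + μVu²) < ∞`,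
`∫|u|^r ≤ |{V<c₀}|^{(2*-r)/2*} S^{-r} ‖u‖_μ^r`. -/
theorem stmt_2 (N : ℕ) (hN : 3 ≤ N) (r c₀ S μ : ℝ) (hr2 : 2 ≤ r) (hr2s : r ≤ twoStar N)
    (hc₀ : 0 < c₀) (hS : 0 < S)
    (V : EuclideanSpace ℝ (Fin N) → ℝ) (hVmeas : Measurable V) (hVpos : ∀ x, 0 ≤ V x)
    (hVfin : volume {x | V x < c₀} < ⊤) (hVne : 0 < volume {x | V x < c₀})
    (hμ : S ^ 2 * (c₀ * (volume {x | V x < c₀}).toReal ^ ((twoStar N - 2) / twoStar N))⁻¹ ≤ μ)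
    (hSob : ∀ v : EuclideanSpace ℝ (Fin N) → ℝ, Differentiable ℝ v →
      MemLp v 2 volume → MemLp v (ENNReal.ofReal (twoStar N)) volume →
      MemLp (fun x => ‖fderiv ℝ v x‖) 2 volume →
      S * (∫ x, |v x| ^ twoStar N) ^ (1 / twoStar N) ≤
        (∫ x, ‖fderiv ℝ v x‖ ^ 2) ^ ((1 : ℝ) / 2))
    (u : EuclideanSpace ℝ (Fin N) → ℝ) (hu : Differentiable ℝ u)
    (hu2 : MemLp u 2 volume) (hu2s : MemLp u (ENNReal.ofReal (twoStar N)) volume)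
    (hugrad : MemLp (fun x => ‖fderiv ℝ u x‖) 2 volume)
    (hVu : Integrable (fun x => V x * (u x) ^ 2)) :
    (∫ x, |u x| ^ r) ≤
      (volume {x | V x < c₀}).toReal ^ ((twoStar N - r) / twoStar N) * S ^ (-r) *
        (∫ x, (‖fderiv ℝ u x‖ ^ 2 + μ * V x * (u x) ^ 2)) ^ (r / 2) := by
  set p := twoStar N with hpdef
  set A' := (volume {x | V x < c₀}).toReal with hA'def
  -- basic numeric facts
  have hNR : (3:ℝ) ≤ (N:ℝ) := by exact_mod_cast hN
  have hN2 : (0:ℝ) < (N:ℝ) - 2 := by linarith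
  have hp2 : 2 < p := by
    rw [hpdef, twoStar, lt_div_iff₀ hN2]; nlinarith
  have hp0 : 0 < p := by linarith
  have hr0 : 0 < r := by linarith
  have hpne : p ≠ 0 := by positivity
  have hp2ne : p - 2 ≠ 0 := by intro h; linarith
  have hc₀ne : c₀ ≠ 0 := hc₀.ne'
  have hSne : S ≠ 0 := hS.ne'
  have hA'pos : 0 < A' := ENNReal.toReal_pos hVne.ne' hVfin.ne
  have he : (0:ℝ) < (p - 2) / p := div_pos (by linarith) hp0
  have hApe : 0 < A' ^ ((p - 2) / p) := Real.rpow_pos_of_pos hA'pos _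
  have hμpos : 0 < μ := lt_of_lt_of_le (by positivity) hμ
  -- measurability of u
  have hum : AEMeasurable u (volume : Measure (EuclideanSpace ℝ (Fin N))) :=
    hu.continuous.measurable.aemeasurable
  have habs : ∀ x, u x ^ 2 = |u x| ^ (2:ℝ) := by
    intro x
    rw [show ((2:ℝ)) = ((2:ℕ):ℝ) by norm_num, Real.rpow_natCast, sq_abs]
  -- quantities
  set I2 := ∫ x, (u x) ^ 2 with hI2
  set Ip := ∫ x, |u x| ^ p with hIp
  set Ir := ∫ x, |u x| ^ r with hIr
  set G := ∫ x, ‖fderiv ℝ u x‖ ^ 2 with hG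
  set W := ∫ x, V x * (u x) ^ 2 with hW
  set T := ∫ x, (‖fderiv ℝ u x‖ ^ 2 + μ * V x * (u x) ^ 2) with hT
  -- integrabilities
  have i2 : Integrable (fun x => (u x) ^ 2) := by
    have := hu2.integrable_norm_rpow (by norm_num) (by norm_num)
    refine this.congr (Filter.Eventually.of_forall fun x => ?_)
    simp only [ENNReal.toReal_ofNat, Real.norm_eq_abs]
    exact (habs x).symm
  have iG : Integrable (fun x => ‖fderiv ℝ u x‖ ^ 2) := by
    have := hugrad.integrable_norm_rpow (by norm_num) (by norm_num)
    refine this.congr (Filter.Eventually.of_forall fun x => ?_)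
    simp only [ENNReal.toReal_ofNat, norm_norm]
    rw [show ((2:ℝ)) = ((2:ℕ):ℝ) by norm_num, Real.rpow_natCast]
  have ip : Integrable (fun x => |u x| ^ p) := by
    have := hu2s.integrable_norm_rpow (by simp [hp0, hp0.le]) ENNReal.ofReal_ne_top
    refine this.congr (Filter.Eventually.of_forall fun x => ?_)
    simp only [ENNReal.toReal_ofReal hp0.le, Real.norm_eq_abs]
  have iμV : Integrable (fun x => μ * V x * (u x) ^ 2) := by
    simpa [mul_assoc] using hVu.const_mul μ
  have iT : Integrable (fun x => ‖fderiv ℝ u x‖ ^ 2 + μ * V x * (u x) ^ 2) := iG.add iμV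
  -- nonnegativity
  have hW0 : 0 ≤ W := integral_nonneg fun x => mul_nonneg (hVpos x) (sq_nonneg _)
  have hG0 : 0 ≤ G := integral_nonneg fun x => sq_nonneg _
  have hIp0 : 0 ≤ Ip := integral_nonneg fun x => Real.rpow_nonneg (abs_nonneg _) _
  have hI20 : 0 ≤ I2 := integral_nonneg fun x => sq_nonneg _
  have hTGW : T = G + μ * W := by
    rw [hT, integral_add iG iμV, hG, hW]
    congr 1
    rw [← integral_const_mul]
    exact integral_congr_ae (Filter.Eventually.of_forall fun x => by ring)
  have hT0 : 0 ≤ T := by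
    rw [hTGW]; have : 0 ≤ μ * W := mul_nonneg hμpos.le hW0; linarith
  -- Sobolev in convenient form: Ip ≤ S^{-p} G^{p/2}
  have sob : Ip ≤ (S ^ p)⁻¹ * G ^ (p/2) := by
    have hs := hSob u hu hu2 hu2s hugrad
    have e1 : Ip ^ (1/p) ≤ G ^ ((1:ℝ)/2) / S := by
      rw [le_div_iff₀ hS]; linarith [hs]
    have e2 : Ip = (Ip ^ (1/p)) ^ p := by
      rw [← Real.rpow_mul hIp0, one_div_mul_cancel hp0.ne', Real.rpow_one]
    calc Ip = (Ip ^ (1/p)) ^ p := e2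
      _ ≤ (G ^ ((1:ℝ)/2) / S) ^ p :=
          Real.rpow_le_rpow (Real.rpow_nonneg hIp0 _) e1 hp0.le
      _ = (S ^ p)⁻¹ * G ^ (p/2) := by
          rw [Real.div_rpow (Real.rpow_nonneg hG0 _) hS.le, ← Real.rpow_mul hG0,
            show (1:ℝ)/2 * p = p/2 by ring, div_eq_mul_inv, mul_comm]
  -- L² bound, part 1: Hölder on the set
  have hset : MeasurableSet {x | V x < c₀} := measurableSet_lt hVmeas measurable_const
  have h1 : ∫ x in {x | V x < c₀}, (u x) ^ 2 ≤ A' ^ ((p-2)/p) * Ip ^ (2/p) := by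
    have hab : Real.HolderConjugate (p/2) (p/(p-2)) := by
      rw [Real.holderConjugate_iff]; constructor
      · linarith
      · rw [inv_div, inv_div]; field_simp; ring
    have ptwp : ∀ x : EuclideanSpace ℝ (Fin N), ((u x) ^ 2) ^ (p/2) = |u x| ^ p := by
      intro x
      rw [habs x, ← Real.rpow_mul (abs_nonneg _), show (2:ℝ) * (p/2) = p by ring]
    have key := real_holder (volume.restrict {x | V x < c₀})
      (f := fun x => (u x) ^ 2) (g := fun _ => (1:ℝ))
      ((hu.continuous.measurable.pow_const 2).aemeasurable) aemeasurable_const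
      (fun x => sq_nonneg _) (fun _ => zero_le_one) hab
      (ip.restrict.congr (Filter.Eventually.of_forall fun x => (ptwp x).symm))
      (by simp only [Real.one_rpow]
          exact integrableOn_const hVfin.ne)
    simp only [mul_one, Real.one_rpow] at key
    have e1 : ∫ x in {x | V x < c₀}, ((u x) ^ 2) ^ (p/2) = ∫ x in {x | V x < c₀}, |u x| ^ p :=
      integral_congr_ae (Filter.Eventually.of_forall fun x => ptwp x)
    have e2 : ∫ x in {x | V x < c₀}, (1:ℝ) = A' := by
      simp [hA'def, Measure.real]
    rw [e1, e2] at key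
    have e3 : ∫ x in {x | V x < c₀}, |u x| ^ p ≤ Ip :=
      setIntegral_le_integral ip
        (Filter.Eventually.of_forall fun x => Real.rpow_nonneg (abs_nonneg _) _)
    have e4 : (∫ x in {x | V x < c₀}, |u x| ^ p) ^ (1/(p/2)) ≤ Ip ^ (2/p) := by
      rw [show 1/(p/2) = 2/p by rw [one_div_div]]
      exact Real.rpow_le_rpow
        (integral_nonneg fun x => Real.rpow_nonneg (abs_nonneg _) _) e3 (by positivity)
    calc ∫ x in {x | V x < c₀}, (u x) ^ 2
        ≤ (∫ x in {x | V x < c₀}, |u x| ^ p) ^ (1/(p/2)) * A' ^ (1/(p/(p-2))) := key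
      _ ≤ Ip ^ (2/p) * A' ^ ((p-2)/p) := by
          rw [show 1/(p/(p-2)) = (p-2)/p by rw [one_div_div]]
          exact mul_le_mul_of_nonneg_right e4 (Real.rpow_nonneg hA'pos.le _)
      _ = A' ^ ((p-2)/p) * Ip ^ (2/p) := mul_comm _ _
  -- L² bound, part 2: splitting
  have h2 : I2 ≤ (∫ x in {x | V x < c₀}, (u x) ^ 2) + (1/c₀) * W := by
    have ptw : ∀ x, (u x) ^ 2 ≤
        Set.indicator {x | V x < c₀} (fun x => (u x) ^ 2) x + (1/c₀) * (V x * (u x) ^ 2) := by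
      intro x
      by_cases hx : V x < c₀
      · rw [Set.indicator_of_mem (show x ∈ {x | V x < c₀} from hx)]
        have : 0 ≤ (1/c₀) * (V x * (u x) ^ 2) :=
          mul_nonneg (by positivity) (mul_nonneg (hVpos x) (sq_nonneg _))
        linarith
      · rw [Set.indicator_of_notMem (show x ∉ {x | V x < c₀} from hx)]
        push_neg at hx
        have h := mul_le_mul_of_nonneg_right hx (sq_nonneg (u x))
        calc (u x) ^ 2 = (1/c₀) * (c₀ * (u x) ^ 2) := by field_simp
          _ ≤ (1/c₀) * (V x * (u x) ^ 2) := by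
              apply mul_le_mul_of_nonneg_left h (by positivity)
          _ ≤ 0 + (1/c₀) * (V x * (u x) ^ 2) := by linarith
    have hint : Integrable (fun x =>
        Set.indicator {x | V x < c₀} (fun x => (u x) ^ 2) x + (1/c₀) * (V x * (u x) ^ 2)) :=
      (i2.indicator hset).add (hVu.const_mul _)
    calc I2 ≤ ∫ x, (Set.indicator {x | V x < c₀} (fun x => (u x) ^ 2) x
          + (1/c₀) * (V x * (u x) ^ 2)) := integral_mono i2 hint ptw
      _ = (∫ x in {x | V x < c₀}, (u x) ^ 2) + (1/c₀) * W := by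
          rw [integral_add (i2.indicator hset) (hVu.const_mul _),
            integral_indicator hset, integral_const_mul]
  -- interpolation
  have h3 : Ir ≤ I2 ^ ((p-r)/(p-2)) * Ip ^ ((r-2)/(p-2)) := by
    rcases eq_or_lt_of_le hr2 with hr2' | hr2'
    · -- r = 2
      subst hr2'
      have hp2ne : p - 2 ≠ 0 := by linarith
      rw [show ((2:ℝ)-2)/(p-2) = 0 by rw [sub_self, zero_div], Real.rpow_zero, mul_one,
        show (p-(2:ℝ))/(p-2) = 1 from div_self hp2ne, Real.rpow_one]
      have : Ir = I2 :=
        integral_congr_ae (Filter.Eventually.of_forall fun x => (habs x).symm)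
      linarith
    rcases eq_or_lt_of_le hr2s with hrp' | hrp'
    · -- r = p
      have hp2ne : p - 2 ≠ 0 := by linarith
      have hIrIp : Ir = Ip := by rw [hIr, hIp, hrp']
      rw [hrp', show (p-p)/(p-2) = 0 by rw [sub_self, zero_div], Real.rpow_zero, one_mul,
        show (p-(2:ℝ))/(p-2) = 1 from div_self hp2ne, Real.rpow_one, hIrIp]
    · -- 2 < r < p : Hölder
      have hpr : 0 < p - r := by linarith
      have hr2'' : 0 < r - 2 := by linarith
      have hp2' : 0 < p - 2 := by linarith
      have hab : Real.HolderConjugate ((p-2)/(p-r)) ((p-2)/(r-2)) := by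
        rw [Real.holderConjugate_iff]; constructor
        · rw [lt_div_iff₀ hpr]; linarith
        · rw [inv_div, inv_div]; field_simp; ring
      have hα0 : 0 ≤ 2 * ((p-r)/(p-2)) := by positivity
      have hβ0 : 0 ≤ p * ((r-2)/(p-2)) := by positivity
      have huma : AEMeasurable (fun x => |u x|)
          (volume : Measure (EuclideanSpace ℝ (Fin N))) :=
        hu.continuous.abs.measurable.aemeasurable
      have pta : ∀ x : EuclideanSpace ℝ (Fin N),
          (|u x| ^ (2 * ((p-r)/(p-2)))) ^ ((p-2)/(p-r)) = u x ^ 2 := by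
        intro x
        rw [← Real.rpow_mul (abs_nonneg _),
          show (2:ℝ) * ((p-r)/(p-2)) * ((p-2)/(p-r)) = 2 by field_simp, ← habs x]
      have ptb : ∀ x : EuclideanSpace ℝ (Fin N),
          (|u x| ^ (p * ((r-2)/(p-2)))) ^ ((p-2)/(r-2)) = |u x| ^ p := by
        intro x
        rw [← Real.rpow_mul (abs_nonneg _),
          show p * ((r-2)/(p-2)) * ((p-2)/(r-2)) = p by field_simp]
      have pt0 : ∀ x : EuclideanSpace ℝ (Fin N),
          |u x| ^ (2 * ((p-r)/(p-2))) * |u x| ^ (p * ((r-2)/(p-2))) = |u x| ^ r := by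
        intro x
        rw [← Real.rpow_add_of_nonneg (abs_nonneg _) hα0 hβ0,
          show 2 * ((p-r)/(p-2)) + p * ((r-2)/(p-2)) = r by field_simp; ring]
      have key := real_holder (volume : Measure (EuclideanSpace ℝ (Fin N)))
        (f := fun x => |u x| ^ (2 * ((p-r)/(p-2)))) (g := fun x => |u x| ^ (p * ((r-2)/(p-2))))
        ((Real.continuous_rpow_const hα0).measurable.comp_aemeasurable huma)
        ((Real.continuous_rpow_const hβ0).measurable.comp_aemeasurable huma)
        (fun x => Real.rpow_nonneg (abs_nonneg _) _)
        (fun x => Real.rpow_nonneg (abs_nonneg _) _) hab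
        (i2.congr (Filter.Eventually.of_forall fun x => (pta x).symm))
        (ip.congr (Filter.Eventually.of_forall fun x => (ptb x).symm))
      have e0 : ∫ x, |u x| ^ (2 * ((p-r)/(p-2))) * |u x| ^ (p * ((r-2)/(p-2))) = Ir :=
        integral_congr_ae (Filter.Eventually.of_forall pt0)
      have ea : ∫ x, (|u x| ^ (2 * ((p-r)/(p-2)))) ^ ((p-2)/(p-r)) = I2 :=
        integral_congr_ae (Filter.Eventually.of_forall pta)
      have eb : ∫ x, (|u x| ^ (p * ((r-2)/(p-2)))) ^ ((p-2)/(r-2)) = Ip :=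
        integral_congr_ae (Filter.Eventually.of_forall ptb)
      rw [e0, ea, eb,
        show (1:ℝ)/((p-2)/(p-r)) = (p-r)/(p-2) from one_div_div _ _,
        show (1:ℝ)/((p-2)/(r-2)) = (r-2)/(p-2) from one_div_div _ _] at key
      exact key
  -- combine
  by_cases hTz : T = 0
  · -- degenerate case: u = 0 a.e.
    have hμW0 : 0 ≤ μ * W := mul_nonneg hμpos.le hW0
    have hGz : G = 0 := by rw [hTGW] at hTz; linarith
    have hWz : W = 0 := by
      rw [hTGW] at hTz; nlinarith
    have hIpz : Ip = 0 := by
      have := sob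
      rw [hGz, Real.zero_rpow (by positivity : (p/2:ℝ) ≠ 0), mul_zero] at this
      linarith
    have hI2z : I2 = 0 := by
      have h1' : ∫ x in {x | V x < c₀}, (u x) ^ 2 ≤ 0 := by
        have := h1
        rw [hIpz, Real.zero_rpow (by positivity : ((2:ℝ)/p) ≠ 0), mul_zero] at this
        exact this
      have hcW : (1/c₀) * W = 0 := by rw [hWz, mul_zero]
      have := h2
      rw [hcW] at this
      linarith
    have huz : ∀ᵐ x ∂(volume : Measure (EuclideanSpace ℝ (Fin N))), (u x) ^ 2 = 0 := by
      have := (integral_eq_zero_iff_of_nonneg (fun x => sq_nonneg (u x)) i2).1 hI2z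
      filter_upwards [this] with x hx using hx
    have hIrz : Ir = 0 := by
      rw [hIr]
      rw [show (0:ℝ) = ∫ (x : EuclideanSpace ℝ (Fin N)), (0:ℝ) by simp]
      refine integral_congr_ae ?_
      filter_upwards [huz] with x hx
      have : u x = 0 := by
        have := sq_eq_zero_iff.1 hx; exact this
      simp [this, Real.zero_rpow hr0.ne']
    rw [hIrz]
    have : 0 ≤ A' ^ ((p-r)/p) * S ^ (-r) * T ^ (r/2) := by positivity
    linarith
  · have hTpos : 0 < T := lt_of_le_of_ne hT0 (Ne.symm hTz)
    set e := (p-2)/p with hedef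
    set K := A' ^ e / S ^ 2 with hK
    have hKpos : 0 < K := by positivity
    have hμK : 1/c₀ ≤ μ * K := by
      have h := mul_le_mul_of_nonneg_right hμ
        (le_of_lt (by positivity : (0:ℝ) < A' ^ e / S ^ 2))
      calc 1/c₀ = S ^ 2 * (c₀ * A' ^ e)⁻¹ * (A' ^ e / S ^ 2) := by
            have hAe : A' ^ e ≠ 0 := ne_of_gt (by positivity)
            field_simp
          _ ≤ μ * (A' ^ e / S ^ 2) := h
          _ = μ * K := by rw [hK]
    have c2 : Ip ^ (2/p) ≤ (S ^ 2)⁻¹ * G := by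
      have m := Real.rpow_le_rpow hIp0 sob (by positivity : (0:ℝ) ≤ 2/p)
      calc Ip ^ (2/p) ≤ ((S ^ p)⁻¹ * G ^ (p/2)) ^ (2/p) := m
        _ = (S ^ 2)⁻¹ * G := by
            rw [Real.mul_rpow (by positivity) (Real.rpow_nonneg hG0 _)]
            congr 1
            · rw [show ((S:ℝ) ^ p)⁻¹ = S ^ (-p) from (Real.rpow_neg hS.le p).symm,
                ← Real.rpow_mul hS.le, show -p * (2/p) = -2 by field_simp,
                Real.rpow_neg hS.le, show ((2:ℝ)) = ((2:ℕ):ℝ) by norm_num,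
                Real.rpow_natCast]
            · rw [← Real.rpow_mul hG0, show p/2 * (2/p) = 1 by field_simp, Real.rpow_one]
    have c3 : I2 ≤ K * T := by
      calc I2 ≤ A' ^ e * Ip ^ (2/p) + (1/c₀) * W := by
            have := h2.trans (add_le_add_left h1 _)
            exact this
        _ ≤ A' ^ e * ((S ^ 2)⁻¹ * G) + (μ * K) * W := by
            refine add_le_add ?_ (mul_le_mul_of_nonneg_right hμK hW0)
            exact mul_le_mul_of_nonneg_left c2 (Real.rpow_nonneg hA'pos.le _)
        _ = K * G + μ * K * W := by rw [hK]; ring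
        _ = K * T := by rw [hTGW]; ring
    have c4 : Ip ≤ (S ^ p)⁻¹ * T ^ (p/2) := by
      have hGT : G ≤ T := by
        rw [hTGW]; have : 0 ≤ μ * W := mul_nonneg hμpos.le hW0; linarith
      refine sob.trans ?_
      exact mul_le_mul_of_nonneg_left
        (Real.rpow_le_rpow hG0 hGT (by positivity)) (by positivity)
    -- final chain
    set α := (p-r)/(p-2) with hα
    set β := (r-2)/(p-2) with hβ
    have hα0 : 0 ≤ α := by
      apply div_nonneg <;> linarith
    have hβ0 : 0 ≤ β := by
      apply div_nonneg <;> linarith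
    have final : Ir ≤ (K * T) ^ α * ((S ^ p)⁻¹ * T ^ (p/2)) ^ β := by
      refine h3.trans ?_
      exact mul_le_mul (Real.rpow_le_rpow hI20 c3 hα0)
        (Real.rpow_le_rpow hIp0 c4 hβ0) (Real.rpow_nonneg hIp0 _)
        (Real.rpow_nonneg (by positivity) _)
    refine final.trans (le_of_eq ?_)
    -- algebraic identity
    have hS2 : ((S:ℝ) ^ 2)⁻¹ = S ^ (-2:ℝ) := by
      rw [Real.rpow_neg hS.le, show ((2:ℝ)) = ((2:ℕ):ℝ) by norm_num, Real.rpow_natCast]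
    have hSp : ((S:ℝ) ^ p)⁻¹ = S ^ (-p) := (Real.rpow_neg hS.le p).symm
    have f1 : (K * T) ^ α = A' ^ (e * α) * S ^ (-(2*α)) * T ^ α := by
      rw [hK, div_eq_mul_inv, hS2,
        Real.mul_rpow (by positivity) hT0,
        Real.mul_rpow (Real.rpow_nonneg hA'pos.le _) (by positivity),
        ← Real.rpow_mul hA'pos.le, ← Real.rpow_mul hS.le,
        show (-2:ℝ) * α = -(2*α) by ring]
    have f2 : ((S ^ p)⁻¹ * T ^ (p/2)) ^ β = A' ^ (0:ℝ) * S ^ (-(p*β)) * T ^ (p/2*β) := by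
      rw [hSp, Real.mul_rpow (by positivity) (Real.rpow_nonneg hT0 _),
        ← Real.rpow_mul hS.le, ← Real.rpow_mul hT0, Real.rpow_zero,
        show -p * β = -(p*β) by ring, one_mul]
    rw [f1, f2,
      rpow_alg hA'pos hS hTpos
        (show e * α + 0 = (p-r)/p by rw [hedef, hα]; field_simp; ring)
        (show -(2*α) + -(p*β) = -r by rw [hα, hβ]; field_simp; ring)
        (show α + p/2*β = r/2 by rw [hα, hβ]; field_simp; ring)]
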